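/- arXiv:1511.00824 — 8 statements merged into one kernel-verified Lean document; each statement's English description precedes it below -/
import Mathlib

section
/- For groups X and Z and a surjective group homomorphism f : X → Y, the commutative square with top map θ_{X,Z} : X ∗ Z → X × Z (induced by the inclusions into the product), bottom map θ_{Y,Z} : Y ∗ Z → Y × Z, left map f ∗ Z : X ∗ Z → Y ∗ Z and right map f × Z : X × Z → Y × Z is a pushout square in the category of groups, and moreover the comparison map X ∗ Z → (Y ∗ Z) ×_{Y × Z} (X × Z) to the pullback is surjective. -/
open Monoid

/-- For groups `X, Z` and a surjective homomorphism `f : X → Y`, the commutative square with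
top map `θ_{X,Z} : X ∗ Z → X × Z`, bottom map `θ_{Y,Z} : Y ∗ Z → Y × Z`, left map
`f ∗ Z` and right map `f × Z` is a pushout square in the category of groups, and the
comparison map `X ∗ Z → (Y ∗ Z) ×_{Y × Z} (X × Z)` to the pullback is surjective
(the square is a regular pushout). -/
theorem theta_square_is_regular_pushout
    {X : Type u} {Y : Type u} {Z : Type u} [Group X] [Group Y] [Group Z]
    (f : X →* Y) (hf : Function.Surjective f) :
    -- the square commutes
    ((Coprod.lift (MonoidHom.inl Y Z) (MonoidHom.inr Y Z)).comp
        (Coprod.map f (MonoidHom.id Z)) =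
      (f.prodMap (MonoidHom.id Z)).comp
        (Coprod.lift (MonoidHom.inl X Z) (MonoidHom.inr X Z))) ∧
    -- it is a pushout: universal property
    (∀ (W : Type u) (_ : Group W) (u : Monoid.Coprod Y Z →* W) (v : X × Z →* W),
        u.comp (Coprod.map f (MonoidHom.id Z)) =
          v.comp (Coprod.lift (MonoidHom.inl X Z) (MonoidHom.inr X Z)) →
        ∃! w : Y × Z →* W,
          w.comp (Coprod.lift (MonoidHom.inl Y Z) (MonoidHom.inr Y Z)) = u ∧
            w.comp (f.prodMap (MonoidHom.id Z)) = v) ∧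
    -- the comparison map to the pullback is surjective
    (∀ (a : Monoid.Coprod Y Z) (b : X × Z),
        Coprod.lift (MonoidHom.inl Y Z) (MonoidHom.inr Y Z) a =
          f.prodMap (MonoidHom.id Z) b →
        ∃ w : Monoid.Coprod X Z,
          Coprod.map f (MonoidHom.id Z) w = a ∧
            Coprod.lift (MonoidHom.inl X Z) (MonoidHom.inr X Z) w = b) := by
  
  have hcomm :
      (Coprod.lift (MonoidHom.inl Y Z) (MonoidHom.inr Y Z)).comp
          (Coprod.map f (MonoidHom.id Z)) =
        (f.prodMap (MonoidHom.id Z)).comp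
          (Coprod.lift (MonoidHom.inl X Z) (MonoidHom.inr X Z)) := by
    apply Coprod.hom_ext <;> ext x <;> simp
  refine ⟨hcomm, ?_, ?_⟩
  · intro W _ u v huv
    have key : ∀ (y : Y) (z : Z),
        u (Coprod.inr z) * u (Coprod.inl y) = u (Coprod.inl y) * u (Coprod.inr z) := by
      intro y z
      obtain ⟨x, rfl⟩ := hf y
      have h1 := DFunLike.congr_fun huv (Coprod.inr z * Coprod.inl x)
      have h2 := DFunLike.congr_fun huv (Coprod.inl x * Coprod.inr z)
      simp only [MonoidHom.comp_apply, map_mul, Coprod.map_apply_inl, Coprod.map_apply_inr,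
        Coprod.lift_apply_inl, Coprod.lift_apply_inr, MonoidHom.id_apply] at h1 h2
      rw [h1, h2, ← map_mul, ← map_mul]
      congr 1
      simp [Prod.mul_def]
    refine ⟨MonoidHom.mk' (fun p => u (Coprod.inl p.1 * Coprod.inr p.2)) ?_, ⟨?_, ?_⟩, ?_⟩
    · intro p q
      simp only [Prod.fst_mul, Prod.snd_mul, map_mul]
      rw [mul_assoc, ← mul_assoc (u (Coprod.inl q.1)), ← key, mul_assoc, ← mul_assoc]
    · apply Coprod.hom_ext <;> ext a <;> simp
    · ext p
      have := DFunLike.congr_fun huv (Coprod.inl p.1 * Coprod.inr p.2)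
      simp only [MonoidHom.comp_apply, map_mul, Coprod.map_apply_inl, Coprod.map_apply_inr,
        Coprod.lift_apply_inl, Coprod.lift_apply_inr, MonoidHom.id_apply] at this
      show u (Coprod.inl (f p.1) * Coprod.inr p.2) = v p
      rw [map_mul, this, ← map_mul]
      congr 1
      simp [Prod.mul_def]
    · intro w' ⟨hw1, hw2⟩
      ext p
      have e1 : w' (p.1, (1 : Z)) = u (Coprod.inl p.1) := by
        have := DFunLike.congr_fun hw1 (Coprod.inl p.1); simpa using this
      have e2 : w' ((1 : Y), p.2) = u (Coprod.inr p.2) := by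
        have := DFunLike.congr_fun hw1 (Coprod.inr p.2); simpa using this
      have : w' p = w' (p.1, (1 : Z)) * w' ((1 : Y), p.2) := by
        rw [← map_mul]; congr 1; simp [Prod.mul_def]
      simp only [MonoidHom.mk'_apply, this, e1, e2, map_mul]
  · intro a b hab
    have hsurj : Function.Surjective (Coprod.map f (MonoidHom.id Z)) := by
      intro c
      induction c using Coprod.induction_on with
      | inl y => obtain ⟨x, hx⟩ := hf y; exact ⟨Coprod.inl x, by simp [hx]⟩
      | inr z => exact ⟨Coprod.inr z, by simp⟩
      | mul c d hc hd =>
        obtain ⟨c', rfl⟩ := hc; obtain ⟨d', rfl⟩ := hd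
        exact ⟨c' * d', by simp⟩
    obtain ⟨w0, rfl⟩ := hsurj a
    have hth := DFunLike.congr_fun hcomm w0
    simp only [MonoidHom.comp_apply] at hth
    rw [hth] at hab
    set p := Coprod.lift (MonoidHom.inl X Z) (MonoidHom.inr X Z) w0 with hp
    have h1 : f p.1 = f b.1 := by simpa using congrArg Prod.fst hab
    have h2 : p.2 = b.2 := by simpa using congrArg Prod.snd hab
    refine ⟨w0 * Coprod.inl (p.1⁻¹ * b.1), ?_, ?_⟩
    · simp [map_mul, ← h1]
    · rw [map_mul]
      simp only [Coprod.lift_apply_inl, ← hp]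
      ext <;> simp [h2]
end

section
/- For any group X, the abelianization of X is the pushout (in the category of groups) of the canonical map θ_{X,X} : X ∗ X → X × X along the folding map ∇ : X ∗ X → X induced by the identity on each free factor. Concretely, X/[X,X] together with the quotient map X → X/[X,X] and the map X × X → X/[X,X], (a,b) ↦ ab[X,X], is the pushout of θ_{X,X} and ∇. -/
open Monoid

/-- The abelianization of a group `X` is the pushout of `θ_{X,X} : X ∗ X → X × X` along the
folding map `∇ : X ∗ X → X`: the square with the quotient map `X → X/[X,X]` and the map
`X × X → X/[X,X], (a,b) ↦ ab[X,X]` commutes and satisfies the universal property of the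
pushout in the category of groups. -/
theorem abelianization_is_pushout_of_theta_along_fold
    {X : Type u} [Group X] :
    ((Abelianization.of.comp (MonoidHom.fst X X) *
          Abelianization.of.comp (MonoidHom.snd X X)).comp
        (Coprod.lift (MonoidHom.inl X X) (MonoidHom.inr X X)) =
      Abelianization.of.comp (Coprod.lift (MonoidHom.id X) (MonoidHom.id X))) ∧
    ∀ (W : Type u) (_ : Group W) (u : X →* W) (v : X × X →* W),
      v.comp (Coprod.lift (MonoidHom.inl X X) (MonoidHom.inr X X)) =
        u.comp (Coprod.lift (MonoidHom.id X) (MonoidHom.id X)) →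
      ∃! w : Abelianization X →* W,
        w.comp Abelianization.of = u ∧
          w.comp (Abelianization.of.comp (MonoidHom.fst X X) *
            Abelianization.of.comp (MonoidHom.snd X X)) = v := by
  constructor
  · apply Coprod.hom_ext <;> ext x <;>
      simp [MonoidHom.comp_apply, MonoidHom.mul_apply]
  · intro W _ u v h
    have hvl : ∀ x : X, v (x, 1) = u x := fun x =>
      congrArg (fun f => f (Coprod.inl x)) h
    have hvr : ∀ x : X, v (1, x) = u x := fun x =>
      congrArg (fun f => f (Coprod.inr x)) h
    have hv : ∀ a b : X, v (a, b) = u a * u b := by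
      intro a b
      have : (a, b) = (a, (1 : X)) * (1, b) := by simp
      rw [this, map_mul, hvl, hvr]
    have hcomm : ∀ a b : X, Commute (u a) (u b) := by
      intro a b
      have h1 : v (a, b) = u a * u b := hv a b
      have h2 : v (a, b) = u b * u a := by
        have : (a, b) = ((1 : X), b) * (a, (1 : X)) := by simp
        rw [this, map_mul, hvl, hvr]
      exact h1.symm.trans h2
    have hker : commutator X ≤ u.ker := by
      rw [commutator, Subgroup.commutator_le]
      intro a _ b _
      rw [MonoidHom.mem_ker, commutatorElement_def]
      simp only [map_mul, map_inv]
      rw [(hcomm a b).eq]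
      group
    refine ⟨QuotientGroup.lift (commutator X) u fun x hx => hker hx, ⟨?_, ?_⟩, ?_⟩
    · ext x; rfl
    · ext ⟨a, b⟩
      simp only [MonoidHom.comp_apply, MonoidHom.mul_apply, map_mul, hv a b]
      exact map_mul (QuotientGroup.lift (commutator X) u fun x hx => hker hx) (Abelianization.of a) (Abelianization.of b)
    · rintro w ⟨hw1, hw2⟩
      apply Abelianization.hom_ext
      rw [hw1]; ext x; rfl
end

section
/- For any group X, the iterated commutator [X,[X,X]] is contained in the image of ker π₁ ∩ ker π₂ ∩ ker π₃ under the ternary folding map δ₃ : X ∗ X ∗ X → X (the homomorphism restricting to the identity on each free factor), where π_i : X ∗ X ∗ X → X ∗ X are the three contractions killing the i-th factor. -/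
open Monoid
open scoped commutatorElement

variable {X : Type u} [Group X]

/-- The ternary free product `X ∗ X ∗ X`. -/
abbrev TripleCoprod (X : Type u) [Group X] :=
  Monoid.Coprod (Monoid.Coprod X X) X

/-- The contraction killing the first factor. -/
noncomputable def contr₁ : TripleCoprod X →* Monoid.Coprod X X :=
  Coprod.lift (Coprod.lift 1 Coprod.inl) Coprod.inr

/-- The contraction killing the second factor. -/
noncomputable def contr₂ : TripleCoprod X →* Monoid.Coprod X X :=
  Coprod.lift (Coprod.lift Coprod.inl 1) Coprod.inr

/-- The contraction killing the third factor. -/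
noncomputable def contr₃ : TripleCoprod X →* Monoid.Coprod X X :=
  Coprod.lift (MonoidHom.id _) 1

/-- The ternary folding map `δ₃ : X ∗ X ∗ X → X`, the identity on each free factor. -/
noncomputable def fold₃ : TripleCoprod X →* X :=
  Coprod.lift (Coprod.lift (MonoidHom.id X) (MonoidHom.id X)) (MonoidHom.id X)

/-- The iterated commutator `[X,[X,X]]` is contained in the image of
`ker π₁ ∩ ker π₂ ∩ ker π₃` under the ternary folding map `δ₃ : X ∗ X ∗ X → X`,
i.e. in the ternary Higgins commutator `[X,X,X]`. -/
theorem iterated_commutator_le_ternary_higgins :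
    ⁅(⊤ : Subgroup X), ⁅(⊤ : Subgroup X), (⊤ : Subgroup X)⁆⁆ ≤
      Subgroup.map (fold₃ : TripleCoprod X →* X)
        ((contr₁ : TripleCoprod X →* _).ker ⊓ contr₂.ker ⊓ contr₃.ker) := by
  set S := Subgroup.map (fold₃ : TripleCoprod X →* X)
      ((contr₁ : TripleCoprod X →* _).ker ⊓ contr₂.ker ⊓ contr₃.ker) with hS
  have hsurj : Function.Surjective (fold₃ : TripleCoprod X →* X) := by
    intro x
    exact ⟨Coprod.inr x, by simp [fold₃]⟩
  have hnormal : S.Normal := by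
    have : (((contr₁ : TripleCoprod X →* _).ker ⊓ contr₂.ker ⊓ contr₃.ker)).Normal :=
      inferInstance
    exact Subgroup.Normal.map this _ hsurj
  -- key: each ⁅x, ⁅y, z⁆⁆ lies in S
  have key : ∀ x y z : X, ⁅x, ⁅y, z⁆⁆ ∈ S := by
    intro x y z
    refine ⟨⁅(Coprod.inl (Coprod.inl x) : TripleCoprod X),
      ⁅(Coprod.inl (Coprod.inr y) : TripleCoprod X), Coprod.inr z⁆⁆, ⟨⟨?_, ?_⟩, ?_⟩, ?_⟩
    · simp [MonoidHom.mem_ker, map_commutatorElement, contr₁]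
    · simp [MonoidHom.mem_ker, map_commutatorElement, contr₂]
    · simp [MonoidHom.mem_ker, map_commutatorElement, contr₃]
    · simp [map_commutatorElement, fold₃]
  -- the set of c such that ∀ x, ⁅x, c⁆ ∈ S is a subgroup
  let K : Subgroup X :=
    { carrier := {c | ∀ x : X, ⁅x, c⁆ ∈ S}
      one_mem' := by intro x; simpa using S.one_mem
      mul_mem' := by
        intro a b ha hb x
        have h1 : ⁅x, a * b⁆ = ⁅x, a⁆ * (a * ⁅x, b⁆ * a⁻¹) := by
          simp [commutatorElement_def]; group
        rw [h1]
        exact S.mul_mem (ha x) (hnormal.conj_mem _ (hb x) a)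
      inv_mem' := by
        intro a ha x
        have h1 : ⁅x, a⁻¹⁆ = a⁻¹ * ⁅x, a⁆⁻¹ * a⁻¹⁻¹ := by
          simp [commutatorElement_def]; group
        rw [h1]
        exact hnormal.conj_mem _ (S.inv_mem (ha x)) a⁻¹ }
  have hK : ⁅(⊤ : Subgroup X), (⊤ : Subgroup X)⁆ ≤ K := by
    rw [Subgroup.commutator_le]
    intro y _ z _
    exact fun x => key x y z
  rw [Subgroup.commutator_le]
  intro x _ c hc
  exact hK hc x
end

section
/- For any group X, the image of ker π₁ ∩ ker π₂ ∩ ker π₃ under the ternary folding map δ₃ : X ∗ X ∗ X → X equals the iterated commutator subgroup [X,[X,X]]; that is, for groups the ternary Higgins commutator coincides with the iterated commutator of length 3. -/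
open Monoid

variable {X : Type u} [Group X]

/-! ### Auxiliary definitions and lemmas -/

open scoped commutatorElement

section Aux

variable {G : Type u} [Group G]

lemma cswap {z : G} (hz : z ∈ Subgroup.center G) (x : G) : x * z = z * x :=
  Subgroup.mem_center_iff.mp hz x

lemma cmid {z : G} (hz : z ∈ Subgroup.center G) (x y : G) : x * (z * y) = z * (x * y) := by
  rw [← mul_assoc, cswap hz, mul_assoc]

lemma sw (a b : G) : a * b = ⁅a, b⁆ * (b * a) := by
  rw [commutatorElement_def]; group

lemma comm_central (hc : ∀ g x y : G, ⁅g, ⁅x, y⁆⁆ = 1) (a b : G) :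
    ⁅a, b⁆ ∈ Subgroup.center G := by
  rw [Subgroup.mem_center_iff]
  intro g
  have h := hc g a b
  rw [commutatorElement_def g] at h
  have h2 : g * ⁅a, b⁆ * g⁻¹ = ⁅a, b⁆ := mul_inv_eq_one.mp h
  calc g * ⁅a, b⁆ = g * ⁅a, b⁆ * g⁻¹ * g := by group
    _ = ⁅a, b⁆ * g := by rw [h2]

/-- keep only the first factor -/
noncomputable def keep₁ : TripleCoprod G →* G :=
  Coprod.lift (Coprod.lift (MonoidHom.id G) 1) 1

noncomputable def keep₂ : TripleCoprod G →* G :=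
  Coprod.lift (Coprod.lift 1 (MonoidHom.id G)) 1

noncomputable def keep₃ : TripleCoprod G →* G :=
  Coprod.lift 1 (MonoidHom.id G)

noncomputable def keep₁₂ : TripleCoprod G →* G :=
  Coprod.lift (Coprod.lift (MonoidHom.id G) (MonoidHom.id G)) 1

noncomputable def keep₁₃ : TripleCoprod G →* G :=
  Coprod.lift (Coprod.lift (MonoidHom.id G) 1) (MonoidHom.id G)

noncomputable def keep₂₃ : TripleCoprod G →* G :=
  Coprod.lift (Coprod.lift 1 (MonoidHom.id G)) (MonoidHom.id G)

lemma tc_hom_ext {P : Type*} [Monoid P] {f g : TripleCoprod G →* P}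
    (h1 : ∀ x, f (Coprod.inl (Coprod.inl x)) = g (Coprod.inl (Coprod.inl x)))
    (h2 : ∀ y, f (Coprod.inl (Coprod.inr y)) = g (Coprod.inl (Coprod.inr y)))
    (h3 : ∀ z, f (Coprod.inr z) = g (Coprod.inr z)) : f = g :=
  Coprod.hom_ext
    (Coprod.hom_ext (MonoidHom.ext fun x => h1 x) (MonoidHom.ext fun y => h2 y))
    (MonoidHom.ext fun z => h3 z)

@[simp] lemma keep₁_g1 (x : G) : keep₁ (Coprod.inl (Coprod.inl x)) = x := by simp [keep₁]
@[simp] lemma keep₁_g2 (y : G) : keep₁ (Coprod.inl (Coprod.inr y)) = 1 := by simp [keep₁]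
@[simp] lemma keep₁_g3 (z : G) : keep₁ (Coprod.inr z) = 1 := by simp [keep₁]
@[simp] lemma keep₂_g1 (x : G) : keep₂ (Coprod.inl (Coprod.inl x)) = 1 := by simp [keep₂]
@[simp] lemma keep₂_g2 (y : G) : keep₂ (Coprod.inl (Coprod.inr y)) = y := by simp [keep₂]
@[simp] lemma keep₂_g3 (z : G) : keep₂ (Coprod.inr z) = 1 := by simp [keep₂]
@[simp] lemma keep₃_g1 (x : G) : keep₃ (Coprod.inl (Coprod.inl x)) = 1 := by simp [keep₃]
@[simp] lemma keep₃_g2 (y : G) : keep₃ (Coprod.inl (Coprod.inr y)) = 1 := by simp [keep₃]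
@[simp] lemma keep₃_g3 (z : G) : keep₃ (Coprod.inr z) = z := by simp [keep₃]
@[simp] lemma keep₁₂_g1 (x : G) : keep₁₂ (Coprod.inl (Coprod.inl x)) = x := by simp [keep₁₂]
@[simp] lemma keep₁₂_g2 (y : G) : keep₁₂ (Coprod.inl (Coprod.inr y)) = y := by simp [keep₁₂]
@[simp] lemma keep₁₂_g3 (z : G) : keep₁₂ (Coprod.inr z) = 1 := by simp [keep₁₂]
@[simp] lemma keep₁₃_g1 (x : G) : keep₁₃ (Coprod.inl (Coprod.inl x)) = x := by simp [keep₁₃]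
@[simp] lemma keep₁₃_g2 (y : G) : keep₁₃ (Coprod.inl (Coprod.inr y)) = 1 := by simp [keep₁₃]
@[simp] lemma keep₁₃_g3 (z : G) : keep₁₃ (Coprod.inr z) = z := by simp [keep₁₃]
@[simp] lemma keep₂₃_g1 (x : G) : keep₂₃ (Coprod.inl (Coprod.inl x)) = 1 := by simp [keep₂₃]
@[simp] lemma keep₂₃_g2 (y : G) : keep₂₃ (Coprod.inl (Coprod.inr y)) = y := by simp [keep₂₃]
@[simp] lemma keep₂₃_g3 (z : G) : keep₂₃ (Coprod.inr z) = z := by simp [keep₂₃]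
@[simp] lemma fold₃_g1 (x : G) : fold₃ (Coprod.inl (Coprod.inl x)) = x := by simp [fold₃]
@[simp] lemma fold₃_g2 (y : G) : fold₃ (Coprod.inl (Coprod.inr y)) = y := by simp [fold₃]
@[simp] lemma fold₃_g3 (z : G) : fold₃ (Coprod.inr z) = z := by simp [fold₃]

@[simp] lemma contr₁_g1 (x : G) : contr₁ (Coprod.inl (Coprod.inl x)) = 1 := by simp [contr₁]
@[simp] lemma contr₁_g2 (y : G) :
    contr₁ (Coprod.inl (Coprod.inr y)) = Coprod.inl y := by simp [contr₁]
@[simp] lemma contr₁_g3 (z : G) : contr₁ (Coprod.inr z) = Coprod.inr z := by simp [contr₁]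
@[simp] lemma contr₂_g1 (x : G) :
    contr₂ (Coprod.inl (Coprod.inl x)) = Coprod.inl x := by simp [contr₂]
@[simp] lemma contr₂_g2 (y : G) : contr₂ (Coprod.inl (Coprod.inr y)) = 1 := by simp [contr₂]
@[simp] lemma contr₂_g3 (z : G) : contr₂ (Coprod.inr z) = Coprod.inr z := by simp [contr₂]
@[simp] lemma contr₃_g1 (x : G) :
    contr₃ (Coprod.inl (Coprod.inl x)) = Coprod.inl x := by simp [contr₃]
@[simp] lemma contr₃_g2 (y : G) :
    contr₃ (Coprod.inl (Coprod.inr y)) = Coprod.inr y := by simp [contr₃]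
@[simp] lemma contr₃_g3 (z : G) : contr₃ (Coprod.inr z) = 1 := by simp [contr₃]

lemma keep₁_comp : (keep₁ : TripleCoprod G →* G)
    = (Coprod.lift (MonoidHom.id G) 1).comp contr₂ :=
  tc_hom_ext (by simp) (by simp) (by simp)

lemma keep₂_comp : (keep₂ : TripleCoprod G →* G)
    = (Coprod.lift (MonoidHom.id G) 1).comp contr₁ :=
  tc_hom_ext (by simp) (by simp) (by simp)

lemma keep₃_comp : (keep₃ : TripleCoprod G →* G)
    = (Coprod.lift 1 (MonoidHom.id G)).comp contr₁ :=
  tc_hom_ext (by simp) (by simp) (by simp)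

lemma keep₁₂_comp : (keep₁₂ : TripleCoprod G →* G)
    = (Coprod.lift (MonoidHom.id G) (MonoidHom.id G)).comp contr₃ :=
  tc_hom_ext (by simp) (by simp) (by simp)

lemma keep₁₃_comp : (keep₁₃ : TripleCoprod G →* G)
    = (Coprod.lift (MonoidHom.id G) (MonoidHom.id G)).comp contr₂ :=
  tc_hom_ext (by simp) (by simp) (by simp)

lemma keep₂₃_comp : (keep₂₃ : TripleCoprod G →* G)
    = (Coprod.lift (MonoidHom.id G) (MonoidHom.id G)).comp contr₁ :=
  tc_hom_ext (by simp) (by simp) (by simp)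

end Aux

section Core

variable {G : Type u} [Group G] (hc : ∀ g x y : G, ⁅g, ⁅x, y⁆⁆ = 1)

local notation "Z" => Subgroup.center G

include hc

/-- pair multiplication formula -/
lemma pairE (s s' : Z) (A B A' B' : G) :
    ((s : G) * (A * B)) * ((s' : G) * (A' * B')) =
      ((s * s' * ⟨⁅B, A'⁆, comm_central hc B A'⟩ : Z) : G) * ((A * A') * (B * B')) := by
  have hz : (⁅B, A'⁆ : G) ∈ Z := comm_central hc B A'
  push_cast
  calc (s : G) * (A * B) * ((s' : G) * (A' * B'))
      = (s : G) * ((A * B) * ((s' : G) * (A' * B'))) := by group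
    _ = (s : G) * ((s' : G) * ((A * B) * (A' * B'))) := by rw [cmid s'.2]
    _ = (s : G) * ((s' : G) * (A * ((B * A') * B'))) := by group
    _ = (s : G) * ((s' : G) * (A * ((⁅B, A'⁆ * (A' * B)) * B'))) := by rw [← sw]
    _ = (s : G) * ((s' : G) * (A * (⁅B, A'⁆ * ((A' * B) * B')))) := by
        rw [mul_assoc ⁅B, A'⁆]
    _ = (s : G) * ((s' : G) * (⁅B, A'⁆ * (A * ((A' * B) * B')))) := by rw [cmid hz]
    _ = (s : G) * (s' : G) * ⁅B, A'⁆ * ((A * A') * (B * B')) := by group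

/-- the word rearrangement -/
lemma wordE (A B C A' B' C' : G) :
    (A * (B * C)) * (A' * (B' * C')) =
      ⁅C, A'⁆ * (⁅B, A'⁆ * (⁅C, B'⁆ * ((A * A') * ((B * B') * (C * C'))))) := by
  have h1 : (⁅C, A'⁆ : G) ∈ Z := comm_central hc C A'
  have h2 : (⁅B, A'⁆ : G) ∈ Z := comm_central hc B A'
  have h3 : (⁅C, B'⁆ : G) ∈ Z := comm_central hc C B'
  calc (A * (B * C)) * (A' * (B' * C'))
      = A * (B * ((C * A') * (B' * C'))) := by group
    _ = A * (B * ((⁅C, A'⁆ * (A' * C)) * (B' * C'))) := by rw [← sw]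
    _ = A * (B * (⁅C, A'⁆ * ((A' * C) * (B' * C')))) := by rw [mul_assoc ⁅C, A'⁆]
    _ = ⁅C, A'⁆ * (A * (B * ((A' * C) * (B' * C')))) := by rw [cmid h1, cmid h1]
    _ = ⁅C, A'⁆ * (A * ((B * A') * (C * (B' * C')))) := by group
    _ = ⁅C, A'⁆ * (A * ((⁅B, A'⁆ * (A' * B)) * (C * (B' * C')))) := by rw [← sw]
    _ = ⁅C, A'⁆ * (A * (⁅B, A'⁆ * ((A' * B) * (C * (B' * C'))))) := by
        rw [mul_assoc ⁅B, A'⁆]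
    _ = ⁅C, A'⁆ * (⁅B, A'⁆ * (A * ((A' * B) * (C * (B' * C'))))) := by rw [cmid h2]
    _ = ⁅C, A'⁆ * (⁅B, A'⁆ * ((A * A') * (B * ((C * B') * C')))) := by group
    _ = ⁅C, A'⁆ * (⁅B, A'⁆ * ((A * A') * (B * ((⁅C, B'⁆ * (B' * C)) * C')))) := by rw [← sw]
    _ = ⁅C, A'⁆ * (⁅B, A'⁆ * ((A * A') * (B * (⁅C, B'⁆ * ((B' * C) * C'))))) := by
        rw [mul_assoc ⁅C, B'⁆]
    _ = ⁅C, A'⁆ * (⁅B, A'⁆ * (⁅C, B'⁆ * ((A * A') * (B * ((B' * C) * C'))))) := by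
        rw [cmid h3, cmid h3]
    _ = ⁅C, A'⁆ * (⁅B, A'⁆ * (⁅C, B'⁆ * ((A * A') * ((B * B') * (C * C'))))) := by group

lemma assemble (s12 s13 s23 s12' s13' s23' : Z) (A B C A' B' C' : G) :
    (((s12 : G)) * ((s13 : G) * ((s23 : G) * (A * (B * C))))) *
      ((s12' : G) * ((s13' : G) * ((s23' : G) * (A' * (B' * C'))))) =
    ((s12 * s12' * ⟨⁅B, A'⁆, comm_central hc B A'⟩ : Z) : G) *
      (((s13 * s13' * ⟨⁅C, A'⁆, comm_central hc C A'⟩ : Z) : G) *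
        (((s23 * s23' * ⟨⁅C, B'⁆, comm_central hc C B'⟩ : Z) : G) *
          ((A * A') * ((B * B') * (C * C'))))) := by
  have hp : (⁅B, A'⁆ : G) ∈ Z := comm_central hc B A'
  have hq : (⁅C, A'⁆ : G) ∈ Z := comm_central hc C A'
  have hr : (⁅C, B'⁆ : G) ∈ Z := comm_central hc C B'
  rw [cmid s12'.2, cmid s13'.2, cmid s23'.2,
    mul_assoc (s12 : G), mul_assoc (s13 : G), mul_assoc (s23 : G), wordE hc]
  simp only [Subgroup.coe_mul, mul_assoc]
  rw [cmid s12.2, cmid s12.2, cmid s12.2,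
    cmid hp, cmid hp, cmid hp, cmid hp, cmid hp,
    cmid s13.2, cmid s13.2, cmid hq, cmid hq, cmid s23.2]

/-- The decomposition invariant. -/
def Pprop (w : TripleCoprod G) : Prop :=
  ∃ s12 s13 s23 : Z,
    keep₁₂ w = (s12 : G) * (keep₁ w * keep₂ w) ∧
    keep₁₃ w = (s13 : G) * (keep₁ w * keep₃ w) ∧
    keep₂₃ w = (s23 : G) * (keep₂ w * keep₃ w) ∧
    fold₃ w = (s12 : G) * ((s13 : G) * ((s23 : G) * (keep₁ w * (keep₂ w * keep₃ w))))

lemma Pprop_mul {w w' : TripleCoprod G} (h : Pprop w) (h' : Pprop w') :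
    Pprop (w * w') := by
  obtain ⟨s12, s13, s23, e12, e13, e23, ef⟩ := h
  obtain ⟨t12, t13, t23, f12, f13, f23, ff⟩ := h'
  refine ⟨s12 * t12 * ⟨⁅keep₂ w, keep₁ w'⁆, comm_central hc _ _⟩,
    s13 * t13 * ⟨⁅keep₃ w, keep₁ w'⁆, comm_central hc _ _⟩,
    s23 * t23 * ⟨⁅keep₃ w, keep₂ w'⁆, comm_central hc _ _⟩, ?_, ?_, ?_, ?_⟩
  · simp only [map_mul]; rw [e12, f12]; exact pairE hc s12 t12 _ _ _ _
  · simp only [map_mul]; rw [e13, f13]; exact pairE hc s13 t13 _ _ _ _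
  · simp only [map_mul]; rw [e23, f23]; exact pairE hc s23 t23 _ _ _ _
  · simp only [map_mul]; rw [ef, ff]; exact assemble hc s12 s13 s23 t12 t13 t23 _ _ _ _ _ _

lemma Pprop_all (w : TripleCoprod G) : Pprop w := by
  induction w using Coprod.induction_on with
  | inl u =>
    induction u using Coprod.induction_on with
    | inl x => exact ⟨1, 1, 1, by simp, by simp, by simp, by simp⟩
    | inr y => exact ⟨1, 1, 1, by simp, by simp, by simp, by simp⟩
    | mul u v hu hv =>
      rw [show (Coprod.inl (u * v) : TripleCoprod G) = Coprod.inl u * Coprod.inl v from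
        map_mul _ _ _]
      exact Pprop_mul hc hu hv
  | inr z => exact ⟨1, 1, 1, by simp, by simp, by simp, by simp⟩
  | mul w w' hw hw' => exact Pprop_mul hc hw hw'

lemma fold_eq_one {w : TripleCoprod G} (h1 : contr₁ w = 1) (h2 : contr₂ w = 1)
    (h3 : contr₃ w = 1) : fold₃ w = 1 := by
  obtain ⟨s12, s13, s23, e12, e13, e23, ef⟩ := Pprop_all hc w
  have k1 : keep₁ w = 1 := by
    rw [keep₁_comp, MonoidHom.comp_apply, h2, map_one]
  have k2 : keep₂ w = 1 := by
    rw [keep₂_comp, MonoidHom.comp_apply, h1, map_one]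
  have k3 : keep₃ w = 1 := by
    rw [keep₃_comp, MonoidHom.comp_apply, h1, map_one]
  have k12 : keep₁₂ w = 1 := by
    rw [keep₁₂_comp, MonoidHom.comp_apply, h3, map_one]
  have k13 : keep₁₃ w = 1 := by
    rw [keep₁₃_comp, MonoidHom.comp_apply, h2, map_one]
  have k23 : keep₂₃ w = 1 := by
    rw [keep₂₃_comp, MonoidHom.comp_apply, h1, map_one]
  rw [k1, k2, k12] at e12
  rw [k1, k3, k13] at e13
  rw [k2, k3, k23] at e23
  have z12 : (s12 : G) = 1 := by simpa using e12.symm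
  have z13 : (s13 : G) = 1 := by simpa using e13.symm
  have z23 : (s23 : G) = 1 := by simpa using e23.symm
  rw [ef, k1, k2, k3, z12, z13, z23]
  simp

end Core

section Naturality

variable {G H : Type u} [Group G] [Group H] (q : G →* H)

noncomputable def tripleMap : TripleCoprod G →* TripleCoprod H :=
  Coprod.map (Coprod.map q q) q

@[simp] lemma tripleMap_g1 (x : G) :
    tripleMap q (Coprod.inl (Coprod.inl x)) = Coprod.inl (Coprod.inl (q x)) := by
  simp [tripleMap]
@[simp] lemma tripleMap_g2 (y : G) :
    tripleMap q (Coprod.inl (Coprod.inr y)) = Coprod.inl (Coprod.inr (q y)) := by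
  simp [tripleMap]
@[simp] lemma tripleMap_g3 (z : G) :
    tripleMap q (Coprod.inr z) = Coprod.inr (q z) := by
  simp [tripleMap]

lemma contr₁_nat : contr₁.comp (tripleMap q) = (Coprod.map q q).comp contr₁ :=
  tc_hom_ext (by simp) (by simp) (by simp)

lemma contr₂_nat : contr₂.comp (tripleMap q) = (Coprod.map q q).comp contr₂ :=
  tc_hom_ext (by simp) (by simp) (by simp)

lemma contr₃_nat : contr₃.comp (tripleMap q) = (Coprod.map q q).comp contr₃ :=
  tc_hom_ext (by simp) (by simp) (by simp)

lemma fold₃_nat : fold₃.comp (tripleMap q) = q.comp fold₃ :=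
  tc_hom_ext (by simp) (by simp) (by simp)

end Naturality

/-- For groups, the ternary Higgins commutator `[X,X,X]`, i.e. the image of
`ker π₁ ∩ ker π₂ ∩ ker π₃` under the ternary folding map `δ₃ : X ∗ X ∗ X → X`,
equals the iterated commutator `[X,[X,X]]`. -/
theorem ternary_higgins_eq_iterated_commutator :
    Subgroup.map (fold₃ : TripleCoprod X →* X)
        ((contr₁ : TripleCoprod X →* _).ker ⊓ contr₂.ker ⊓ contr₃.ker) =
      ⁅(⊤ : Subgroup X), ⁅(⊤ : Subgroup X), (⊤ : Subgroup X)⁆⁆ := by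
  have fold₃_surj : Function.Surjective (fold₃ : TripleCoprod X →* X) :=
    fun x => ⟨Coprod.inl (Coprod.inl x), by simp⟩
  apply le_antisymm
  · -- the hard inclusion, via the class-2 quotient
    intro g hg
    rw [Subgroup.mem_map] at hg
    obtain ⟨w, hw, rfl⟩ := hg
    simp only [Subgroup.mem_inf, MonoidHom.mem_ker] at hw
    obtain ⟨⟨hw1, hw2⟩, hw3⟩ := hw
    set N : Subgroup X := ⁅(⊤ : Subgroup X), ⁅(⊤ : Subgroup X), (⊤ : Subgroup X)⁆⁆ with hN
    haveI : N.Normal := Subgroup.commutator_normal _ _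
    set q := QuotientGroup.mk' N with hq
    have hc : ∀ g x y : X ⧸ N, ⁅g, ⁅x, y⁆⁆ = 1 := by
      intro g x y
      obtain ⟨g, rfl⟩ := QuotientGroup.mk'_surjective N g
      obtain ⟨x, rfl⟩ := QuotientGroup.mk'_surjective N x
      obtain ⟨y, rfl⟩ := QuotientGroup.mk'_surjective N y
      rw [← map_commutatorElement, ← map_commutatorElement]
      rw [QuotientGroup.mk'_apply, QuotientGroup.eq_one_iff]
      exact Subgroup.commutator_mem_commutator (Subgroup.mem_top _)
        (Subgroup.commutator_mem_commutator (Subgroup.mem_top _) (Subgroup.mem_top _))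
    have h1' : contr₁ (tripleMap q w) = 1 := by
      rw [← MonoidHom.comp_apply, contr₁_nat, MonoidHom.comp_apply, hw1, map_one]
    have h2' : contr₂ (tripleMap q w) = 1 := by
      rw [← MonoidHom.comp_apply, contr₂_nat, MonoidHom.comp_apply, hw2, map_one]
    have h3' : contr₃ (tripleMap q w) = 1 := by
      rw [← MonoidHom.comp_apply, contr₃_nat, MonoidHom.comp_apply, hw3, map_one]
    have hf : q (fold₃ w) = 1 := by
      rw [← MonoidHom.comp_apply, ← fold₃_nat, MonoidHom.comp_apply]
      exact fold_eq_one hc h1' h2' h3'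
    exact (QuotientGroup.eq_one_iff _).mp hf
  · -- the easy inclusion
    set K : Subgroup (TripleCoprod X) :=
      (contr₁ : TripleCoprod X →* _).ker ⊓ contr₂.ker ⊓ contr₃.ker with hK
    haveI hKn : K.Normal := by
      rw [hK]; infer_instance
    have hLn : (Subgroup.map (fold₃ : TripleCoprod X →* X) K).Normal :=
      Subgroup.Normal.map hKn fold₃ fold₃_surj
    have gen : ∀ x y z : X, ⁅x, ⁅y, z⁆⁆ ∈ Subgroup.map (fold₃ : TripleCoprod X →* X) K := by
      intro x y z
      refine ⟨⁅(Coprod.inl (Coprod.inl x) : TripleCoprod X),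
        ⁅(Coprod.inl (Coprod.inr y) : TripleCoprod X), (Coprod.inr z : TripleCoprod X)⁆⁆,
        ?_, ?_⟩
      · refine ⟨⟨?_, ?_⟩, ?_⟩ <;>
          simp [MonoidHom.mem_ker, map_commutatorElement]
      · simp [map_commutatorElement]
    rw [Subgroup.commutator_le]
    intro x _ c hcmem
    have key : ∀ a b c : X, ⁅a, b * c⁆ = ⁅a, b⁆ * (b * ⁅a, c⁆ * b⁻¹) := by
      intro a b c
      simp only [commutatorElement_def]
      group
    have keyinv : ∀ a b : X, ⁅a, b⁻¹⁆ = b⁻¹ * ⁅a, b⁆⁻¹ * b := by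
      intro a b
      simp only [commutatorElement_def]
      group
    rw [Subgroup.commutator_def ⊤ ⊤] at hcmem
    induction hcmem using Subgroup.closure_induction with
    | mem g hg =>
      obtain ⟨a, -, b, -, rfl⟩ := hg
      exact gen x a b
    | one => simp only [commutatorElement_one_right]; exact one_mem _
    | mul a b ha hb pa pb =>
      rw [key]
      exact mul_mem pa (hLn.conj_mem _ pb a)
    | inv a ha pa =>
      rw [keyinv]
      have : a⁻¹ * ⁅x, a⁆⁻¹ * a = a⁻¹ * ⁅x, a⁆⁻¹ * (a⁻¹)⁻¹ := by group
      rw [this]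
      exact hLn.conj_mem _ (inv_mem pa) a⁻¹
end

section
/- A pointed category with binary products in which every object X carries a natural Mal'tsev operation p : X × X × X → X satisfying p(x,y,y) = x and p(x,x,y) = y (natural in X) is such that every object carries a unique internal abelian group structure; concretely, in the category of models of an algebraic theory containing a constant 0 and a Mal'tsev term p, the operation x + y := p(x,0,y) makes every model an abelian group whose operations are homomorphisms. -/
/-- If a pointed set `X` (with base point `z`) carries a Mal'tsev operation `p` satisfying
`p x y y = x`, `p x x y = y` and the middle-interchange law (naturality: `p` is a homomorphism
with respect to itself), then `x + y := p x z y` makes `X` an abelian group whose operations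
are homomorphisms, and this abelian group structure is unique among unital magma structures
with unit `z` compatible with `p`. -/
theorem maltsev_operation_gives_unique_abelian_group
    {X : Type u} (z : X) (p : X → X → X → X)
    (hright : ∀ x y : X, p x y y = x)
    (hleft : ∀ x y : X, p x x y = y)
    (hinterchange : ∀ a b c d e f g h i : X,
      p (p a b c) (p d e f) (p g h i) = p (p a d g) (p b e h) (p c f i)) :
    -- `x + y := p x z y` is commutative
    (∀ x y : X, p x z y = p y z x) ∧
    -- associative
    (∀ x y w : X, p (p x z y) z w = p x z (p y z w)) ∧
    -- `z` is a two-sided unit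
    (∀ x : X, p x z z = x) ∧ (∀ x : X, p z z x = x) ∧
    -- every element has an inverse
    (∀ x : X, ∃ y : X, p x z y = z ∧ p y z x = z) ∧
    -- the addition is a homomorphism with respect to `p`
    (∀ a b c d e f : X,
      p (p a b c) z (p d e f) = p (p a z d) (p b z e) (p c z f)) ∧
    -- uniqueness: any unital magma structure with unit `z` compatible with `p` coincides
    (∀ add' : X → X → X,
      (∀ x : X, add' x z = x) → (∀ x : X, add' z x = x) →
      (∀ a b c d e f : X,
        add' (p a b c) (p d e f) = p (add' a d) (add' b e) (add' c f)) →
      ∀ x y : X, add' x y = p x z y) := by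
  have comm : ∀ x y : X, p x z y = p y z x := by
    intro x y
    have h := hinterchange z z x z z z y z z
    simpa only [hright, hleft] using h
  refine ⟨comm, ?_, fun x => hright x z, fun x => hleft z x, ?_, ?_, ?_⟩
  · intro x y w
    have h := hinterchange x z y z z z z z w
    simpa only [hright, hleft] using h
  · intro x
    have h := hinterchange x z z z z x z z z
    simp only [hright, hleft] at h
    refine ⟨p z x z, h.symm, ?_⟩
    rw [comm]; exact h.symm
  · intro a b c d e f
    have h := hinterchange a b c z z z d e f
    simpa only [hright, hleft] using h
  · intro add' hr hl hom x y
    have h := hom x z z z z y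
    simpa only [hright, hleft, hr, hl] using h
end

section
/- Let G₀ be a group with an action of the symmetric group S₃ by automorphisms such that for every g ∈ G₀, every transposition σ ∈ S₃ and every 3-cycle ρ ∈ S₃, the triality identity [σ,g] · (ρ·[σ,g]) · (ρ²·[σ,g]) = 1 holds, where [σ,g] = (σ·g)g⁻¹. Then in the semidirect product G = G₀ ⋊ S₃, for any two elements g, h of G that are conjugate to elements of order 2 in the subgroup 1 ⋊ S₃ and whose projections to S₃ are distinct, one has (gh)³ = 1. -/
set_option maxRecDepth 100000 in
lemma s3_facts : ∀ σ τ : Equiv.Perm (Fin 3), σ ≠ 1 → σ^2 = 1 → τ ≠ 1 → τ^2 = 1 → σ ≠ τ →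
    (σ*τ ≠ 1 ∧ (σ*τ)^3 = 1 ∧ σ*τ*σ ≠ 1 ∧ (σ*τ*σ)^2 = 1) := by decide

/-- Doro/Hall/Liebeck: if `G₀` is a group with triality, i.e. carries an action of `S₃` by
automorphisms such that `[σ,g]·(ρ·[σ,g])·(ρ²·[σ,g]) = 1` for every `g`, every transposition
`σ` (element of order 2) and every 3-cycle `ρ` (element of order 3), then in the semidirect
product `G = G₀ ⋊ S₃` any two special elements (conjugates of order-2 elements of `S₃`)
with distinct projections to `S₃` satisfy `(gh)³ = 1`. -/
theorem triality_group_condition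
    {G₀ : Type u} [Group G₀] (φ : Equiv.Perm (Fin 3) →* MulAut G₀)
    (htri : ∀ (g : G₀) (σ ρ : Equiv.Perm (Fin 3)),
      σ ≠ 1 → σ ^ 2 = 1 → ρ ≠ 1 → ρ ^ 3 = 1 →
      (φ σ g * g⁻¹) * φ ρ (φ σ g * g⁻¹) * φ (ρ ^ 2) (φ σ g * g⁻¹) = 1) :
    ∀ g h : SemidirectProduct G₀ (Equiv.Perm (Fin 3)) φ,
      (∃ (c : SemidirectProduct G₀ (Equiv.Perm (Fin 3)) φ) (σ : Equiv.Perm (Fin 3)),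
        σ ≠ 1 ∧ σ ^ 2 = 1 ∧ g = c * SemidirectProduct.inr σ * c⁻¹) →
      (∃ (c : SemidirectProduct G₀ (Equiv.Perm (Fin 3)) φ) (σ : Equiv.Perm (Fin 3)),
        σ ≠ 1 ∧ σ ^ 2 = 1 ∧ h = c * SemidirectProduct.inr σ * c⁻¹) →
      SemidirectProduct.rightHom g ≠ SemidirectProduct.rightHom h →
      (g * h) ^ 3 = 1 := by
  rintro g h ⟨c, σ, hσ1, hσ2, rfl⟩ ⟨d, τ, hτ1, hτ2, rfl⟩ hne
  -- conjugate everything by c⁻¹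
  set e : SemidirectProduct G₀ (Equiv.Perm (Fin 3)) φ := c⁻¹ * d with he
  set x : G₀ := e.left with hx
  set π : Equiv.Perm (Fin 3) := e.right with hπ
  set τ' : Equiv.Perm (Fin 3) := π * τ * π⁻¹ with hτ'
  have hback : τ = π⁻¹ * τ' * π := by
    rw [hτ']; simp [mul_assoc]
  have hτ'1 : τ' ≠ 1 := by
    intro hh
    rw [hh] at hback
    simp at hback
    exact hτ1 hback
  have hτ'2 : τ' ^ 2 = 1 := by
    rw [hτ', show (π * τ * π⁻¹)^2 = π * τ^2 * π⁻¹ by simp [pow_two, mul_assoc], hτ2]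
    simp
  have hστ' : σ ≠ τ' := by
    intro hh
    apply hne
    simp only [map_mul, map_inv, SemidirectProduct.rightHom_inr]
    have : π = (SemidirectProduct.rightHom c)⁻¹ * SemidirectProduct.rightHom d := by
      simp [hπ, he, map_mul, map_inv]
    rw [hh, hτ', this]
    group
  obtain ⟨hρ1, hρ3, hμ1, hμ2⟩ := s3_facts σ τ' hσ1 hσ2 hτ'1 hτ'2 hστ'
  have hcσ : ∀ z : Equiv.Perm (Fin 3), σ * (σ * z) = z := fun z => by
    rw [← mul_assoc, ← pow_two, hσ2, one_mul]
  have hcτ : ∀ z : Equiv.Perm (Fin 3), τ' * (τ' * z) = z := fun z => by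
    rw [← mul_assoc, ← pow_two, hτ'2, one_mul]
  have hμρ : σ * τ' * σ * (σ * τ') = σ := by
    rw [mul_assoc (σ * τ') σ (σ * τ'), hcσ, mul_assoc, ← pow_two τ', hτ'2, mul_one]
  -- reduce to conjugated product
  have key : (c * SemidirectProduct.inr σ * c⁻¹) * (d * SemidirectProduct.inr τ * d⁻¹)
      = c * (SemidirectProduct.inr σ * (e * SemidirectProduct.inr τ * e⁻¹)) * c⁻¹ := by
    rw [he]; group
  rw [key, show ∀ a : SemidirectProduct G₀ (Equiv.Perm (Fin 3)) φ,
        (c * a * c⁻¹)^3 = c * a^3 * c⁻¹ from fun a => by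
          simp [pow_succ, mul_assoc]]
  suffices hs : (SemidirectProduct.inr σ * (e * SemidirectProduct.inr τ * e⁻¹) :
      SemidirectProduct G₀ (Equiv.Perm (Fin 3)) φ)^3 = 1 by
    rw [hs]; simp
  -- compute the conjugate explicitly
  have hk : (e * SemidirectProduct.inr τ * e⁻¹ : SemidirectProduct G₀ (Equiv.Perm (Fin 3)) φ)
      = ⟨x * φ τ' x⁻¹, τ'⟩ := by
    ext <;> simp [SemidirectProduct.mul_left, SemidirectProduct.mul_right,
      SemidirectProduct.inv_left, SemidirectProduct.inv_right, hx, hπ, hτ', map_mul,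
      MulAut.mul_apply]
  rw [hk]
  have ha : (SemidirectProduct.inr σ * (⟨x * φ τ' x⁻¹, τ'⟩ : SemidirectProduct G₀ (Equiv.Perm (Fin 3)) φ))
      = ⟨φ σ (x * φ τ' x⁻¹), σ * τ'⟩ := by
    ext <;> simp [SemidirectProduct.mul_left, SemidirectProduct.mul_right]
  rw [ha]
  set ρ : Equiv.Perm (Fin 3) := σ * τ' with hρ
  set v : G₀ := φ σ (x * φ τ' x⁻¹) with hv
  have hpow : (⟨v, ρ⟩ : SemidirectProduct G₀ (Equiv.Perm (Fin 3)) φ)^3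
      = ⟨v * φ ρ v * φ (ρ^2) v, ρ^3⟩ := by
    ext <;> simp [pow_succ, SemidirectProduct.mul_left, SemidirectProduct.mul_right, pow_two,
      map_mul, MulAut.mul_apply, mul_assoc]
  rw [hpow, hρ3]
  have hmain : v * φ ρ v * φ (ρ^2) v = 1 := by
    have := htri (φ ρ x) (σ * τ' * σ) ρ hμ1 hμ2 hρ1 hρ3
    have hv' : φ (σ * τ' * σ) (φ ρ x) * (φ ρ x)⁻¹ = v := by
      rw [hv, ← MulAut.mul_apply, ← map_mul, hρ, hμρ]
      simp [map_mul, MulAut.mul_apply]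
    rwa [hv'] at this
  rw [hmain]
  rfl
end

section
/- In the category of groups, for any group Z the pullback functor along the terminal map (sending a group X to the projection X × Z → Z with its canonical section) preserves binary sums of points over Z: the canonical homomorphism (X × Z) ∗_Z (Y × Z) → (X ∗ Y) × Z from the amalgamated free product over Z is an isomorphism. -/
set_option maxHeartbeats 1000000


open Monoid

variable (X Y Z : Type u) [Group X] [Group Y] [Group Z]

/-- The two-member family of points `X × Z → Z` and `Y × Z → Z` over `Z`. -/
def distribFam : Bool → Type u
  | true => X × Z
  | false => Y × Z

instance distribFamGroup : ∀ b, Group (distribFam X Y Z b)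
  | true => inferInstanceAs (Group (X × Z))
  | false => inferInstanceAs (Group (Y × Z))

/-- The canonical sections `Z → X × Z` and `Z → Y × Z`. -/
def distribBase : ∀ b, Z →* distribFam X Y Z b
  | true => MonoidHom.inr X Z
  | false => MonoidHom.inr Y Z

/-- The legs `X × Z → (X ∗ Y) × Z` and `Y × Z → (X ∗ Y) × Z` of the comparison cocone. -/
def distribLeg : ∀ b, distribFam X Y Z b →* Monoid.Coprod X Y × Z
  | true => (Coprod.inl : X →* Monoid.Coprod X Y).prodMap (MonoidHom.id Z)
  | false => (Coprod.inr : Y →* Monoid.Coprod X Y).prodMap (MonoidHom.id Z)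

theorem distribLeg_comp_base :
    ∀ b, (distribLeg X Y Z b).comp (distribBase X Y Z b) =
      MonoidHom.inr (Monoid.Coprod X Y) Z := by
  intro b
  cases b
  · exact show ((Coprod.inr : Y →* Monoid.Coprod X Y).prodMap (MonoidHom.id Z)).comp
        (MonoidHom.inr Y Z) = MonoidHom.inr (Monoid.Coprod X Y) Z by ext z <;> simp
  · exact show ((Coprod.inl : X →* Monoid.Coprod X Y).prodMap (MonoidHom.id Z)).comp
        (MonoidHom.inr X Z) = MonoidHom.inr (Monoid.Coprod X Y) Z by ext z <;> simp

/-- The canonical map `X ∗ Y →* (X × Z) ∗_Z (Y × Z)`. -/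
def distribPhi : Monoid.Coprod X Y →* PushoutI (distribBase X Y Z) :=
  Coprod.lift
    ((PushoutI.of (φ := distribBase X Y Z) true).comp (MonoidHom.inl X Z))
    ((PushoutI.of (φ := distribBase X Y Z) false).comp (MonoidHom.inl Y Z))

theorem distribPhi_comm (c : Monoid.Coprod X Y) (z : Z) :
    Commute (distribPhi X Y Z c) (PushoutI.base (distribBase X Y Z) z) := by
  induction c using Coprod.induction_on with
  | inl x =>
      rw [← PushoutI.of_apply_eq_base (distribBase X Y Z) true z]
      show Commute ((PushoutI.of true) ((x, 1) : X × Z)) ((PushoutI.of true) (distribBase X Y Z true z))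
      exact (show Commute ((x, 1) : X × Z) (distribBase X Y Z true z) from
        Commute.prod (Commute.one_right x) (Commute.one_left z)).map _
  | inr y =>
      rw [← PushoutI.of_apply_eq_base (distribBase X Y Z) false z]
      show Commute ((PushoutI.of false) ((y, 1) : Y × Z)) ((PushoutI.of false) (distribBase X Y Z false z))
      exact (show Commute ((y, 1) : Y × Z) (distribBase X Y Z false z) from
        Commute.prod (Commute.one_right y) (Commute.one_left z)).map _
  | mul c₁ c₂ h₁ h₂ =>
      rw [map_mul]
      exact h₁.mul_left h₂

/-- The inverse homomorphism `(X ∗ Y) × Z →* (X × Z) ∗_Z (Y × Z)`. -/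
def distribInv : Monoid.Coprod X Y × Z →* PushoutI (distribBase X Y Z) :=
  (distribPhi X Y Z).noncommCoprod (PushoutI.base (distribBase X Y Z))
    (distribPhi_comm X Y Z)

theorem distribBase_true_eq (z : Z) :
    PushoutI.base (distribBase X Y Z) z
      = PushoutI.of (φ := distribBase X Y Z) true (((1 : X), z) : X × Z) :=
  (PushoutI.of_apply_eq_base (distribBase X Y Z) true z).symm

theorem distribBase_false_eq (z : Z) :
    PushoutI.base (distribBase X Y Z) z
      = PushoutI.of (φ := distribBase X Y Z) false (((1 : Y), z) : Y × Z) :=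
  (PushoutI.of_apply_eq_base (distribBase X Y Z) false z).symm

/-- Algebraic distributivity of the category of groups: the canonical homomorphism
`(X × Z) ∗_Z (Y × Z) → (X ∗ Y) × Z` from the amalgamated free product of the points
`X × Z → Z` and `Y × Z → Z` over `Z` is an isomorphism. -/
theorem amalgamated_product_of_points_iso_product_of_coprod :
    Function.Bijective
      (Monoid.PushoutI.lift (distribLeg X Y Z) (MonoidHom.inr (Monoid.Coprod X Y) Z)
        (distribLeg_comp_base X Y Z)) := by
  set L := Monoid.PushoutI.lift (distribLeg X Y Z) (MonoidHom.inr (Monoid.Coprod X Y) Z)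
        (distribLeg_comp_base X Y Z)
  have hφ : L.comp (distribPhi X Y Z) = MonoidHom.inl (Monoid.Coprod X Y) Z := by
    apply Coprod.hom_ext <;> ext x <;>
      simp [L, distribPhi, distribLeg] <;> rfl
  have h1 : L.comp (distribInv X Y Z) = MonoidHom.id _ := by
    apply MonoidHom.ext
    rintro ⟨c, z⟩
    have hc : L (distribPhi X Y Z c) = (c, 1) := DFunLike.congr_fun hφ c
    simp only [MonoidHom.comp_apply, MonoidHom.id_apply, distribInv,
      MonoidHom.noncommCoprod_apply, map_mul, hc]
    simp [L, Prod.ext_iff]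
  have h2 : (distribInv X Y Z).comp L = MonoidHom.id _ := by
    apply PushoutI.hom_ext
    · intro i
      cases i
      · ext p
        obtain ⟨y, z⟩ := p
        show distribInv X Y Z (distribLeg X Y Z false (y, z))
          = PushoutI.of (φ := distribBase X Y Z) false ((y, z) : Y × Z)
        have : (distribLeg X Y Z false (y, z) : Monoid.Coprod X Y × Z)
            = (Coprod.inr y, z) := rfl
        rw [this]
        simp only [distribInv, MonoidHom.noncommCoprod_apply, distribPhi,
          Coprod.lift_apply_inr, MonoidHom.comp_apply, MonoidHom.inl_apply,
          distribBase_false_eq, ← map_mul]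
        show PushoutI.of (φ := distribBase X Y Z) false (((y, 1) : Y × Z))
            * PushoutI.of (φ := distribBase X Y Z) false (((1, z) : Y × Z)) = _
        exact (map_mul (PushoutI.of (φ := distribBase X Y Z) false) ((y, 1) : Y × Z) ((1, z) : Y × Z)).symm.trans
          (congrArg _ (show ((y, 1) : Y × Z) * (1, z) = (y, z) from Prod.ext (mul_one y) (one_mul z)))
      · ext p
        obtain ⟨x, z⟩ := p
        show distribInv X Y Z (distribLeg X Y Z true (x, z))
          = PushoutI.of (φ := distribBase X Y Z) true ((x, z) : X × Z)
        have : (distribLeg X Y Z true (x, z) : Monoid.Coprod X Y × Z)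
            = (Coprod.inl x, z) := rfl
        rw [this]
        simp only [distribInv, MonoidHom.noncommCoprod_apply, distribPhi,
          Coprod.lift_apply_inl, MonoidHom.comp_apply, MonoidHom.inl_apply,
          distribBase_true_eq, ← map_mul]
        show PushoutI.of (φ := distribBase X Y Z) true (((x, 1) : X × Z))
            * PushoutI.of (φ := distribBase X Y Z) true (((1, z) : X × Z)) = _
        exact (map_mul (PushoutI.of (φ := distribBase X Y Z) true) ((x, 1) : X × Z) ((1, z) : X × Z)).symm.trans
          (congrArg _ (show ((x, 1) : X × Z) * (1, z) = (x, z) from Prod.ext (mul_one x) (one_mul z)))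
    · ext z
      simp [L, distribInv]
  constructor
  · intro a b hab
    have := congrArg (distribInv X Y Z) hab
    simpa [← MonoidHom.comp_apply, h2] using this
  · intro p
    exact ⟨distribInv X Y Z p, DFunLike.congr_fun h1 p⟩
end

section
/- Let 1 → F₁ → F → F₂ → 1 be a short exact sequence of functors from groups to groups (pointwise short exact: for each group X, F₁(X) is a normal subgroup of F(X) with quotient F₂(X), naturally in X). For groups X, Y define cr₂^G(X,Y) = ker(G(X ∗ Y) → G(X) × G(Y)) for a functor G with G(1)=1. Then for all X, Y there is a short exact sequence 1 → cr₂^{F₁}(X,Y) → cr₂^{F}(X,Y) → cr₂^{F₂}(X,Y) → 1; in particular cr₂^F vanishes identically iff both cr₂^{F₁} and cr₂^{F₂} do, i.e. F is linear iff F₁ and F₂ are. -/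
open Monoid CategoryTheory

universe u

/-- The map `G(X ∗ Y) → G(X) × G(Y)` induced by the two contractions of the free product;
its kernel is the second cross-effect `cr₂G(X,Y)` of the endofunctor `G` of groups. -/
noncomputable def crMap (G : GrpCat.{u} ⥤ GrpCat.{u}) (X Y : Type u) [Group X] [Group Y] :
    G.obj (GrpCat.of (Monoid.Coprod X Y)) →* G.obj (GrpCat.of X) × G.obj (GrpCat.of Y) :=
  (G.map (GrpCat.ofHom (Coprod.lift (MonoidHom.id X) 1))).hom.prod
    (G.map (GrpCat.ofHom (Coprod.lift 1 (MonoidHom.id Y)))).hom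

section CrAux

variable (X Y : Type u) [Group X] [Group Y]

/-- First contraction. -/
noncomputable def crR1 : GrpCat.of (Monoid.Coprod X Y) ⟶ GrpCat.of X :=
  GrpCat.ofHom (Coprod.lift (MonoidHom.id X) 1)

/-- Second contraction. -/
noncomputable def crR2 : GrpCat.of (Monoid.Coprod X Y) ⟶ GrpCat.of Y :=
  GrpCat.ofHom (Coprod.lift 1 (MonoidHom.id Y))

/-- First inclusion. -/
noncomputable def crJ1 : GrpCat.of X ⟶ GrpCat.of (Monoid.Coprod X Y) :=
  GrpCat.ofHom Coprod.inl

/-- Second inclusion. -/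
noncomputable def crJ2 : GrpCat.of Y ⟶ GrpCat.of (Monoid.Coprod X Y) :=
  GrpCat.ofHom Coprod.inr

lemma cr_mem_ker_iff (G : GrpCat.{u} ⥤ GrpCat.{u}) (w : G.obj (GrpCat.of (Monoid.Coprod X Y))) :
    w ∈ (crMap G X Y).ker ↔
      G.map (crR1 X Y) w = 1 ∧ G.map (crR2 X Y) w = 1 := by
  simp [crMap, crR1, crR2, MonoidHom.mem_ker, Prod.ext_iff]

lemma crJ1_comp_crR1 : crJ1 X Y ≫ crR1 X Y = 𝟙 (GrpCat.of X) := rfl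

lemma crJ2_comp_crR2 : crJ2 X Y ≫ crR2 X Y = 𝟙 (GrpCat.of Y) := rfl

lemma crJ1_comp_crR2 : crJ1 X Y ≫ crR2 X Y = GrpCat.ofHom (1 : X →* Y) := rfl

lemma crJ2_comp_crR1 : crJ2 X Y ≫ crR1 X Y = GrpCat.ofHom (1 : Y →* X) := rfl

end CrAux

lemma cr_map_id (G : GrpCat.{u} ⥤ GrpCat.{u}) (A : GrpCat.{u}) (w : G.obj A) :
    G.map (𝟙 A) w = w := by rw [G.map_id]; rfl

lemma cr_map_map (G : GrpCat.{u} ⥤ GrpCat.{u}) {A B C : GrpCat.{u}} (f : A ⟶ B) (g : B ⟶ C)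
    (w : G.obj A) : G.map g (G.map f w) = G.map (f ≫ g) w :=
  (ConcreteCategory.congr_hom (G.map_comp f g) w).symm

lemma cr_triv_map (G : GrpCat.{u} ⥤ GrpCat.{u}) (hG : Subsingleton (G.obj (GrpCat.of PUnit)))
    {X Y : Type u} [Group X] [Group Y] (g : G.obj (GrpCat.of X)) :
    G.map (GrpCat.ofHom (1 : X →* Y)) g = 1 := by
  have hfac : (GrpCat.ofHom (1 : X →* Y)) =
      GrpCat.ofHom (1 : X →* PUnit) ≫ GrpCat.ofHom (1 : PUnit →* Y) := by ext x; rfl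
  have : G.map (GrpCat.ofHom (1 : X →* Y)) g
      = G.map (GrpCat.ofHom (1 : PUnit →* Y)) (G.map (GrpCat.ofHom (1 : X →* PUnit)) g) := by
    rw [hfac, G.map_comp]; rfl
  rw [this, show G.map (GrpCat.ofHom (1 : X →* PUnit)) g = 1 from Subsingleton.elim _ _]
  exact map_one _

lemma cr_nat {G H : GrpCat.{u} ⥤ GrpCat.{u}} (η : G ⟶ H) {A B : GrpCat.{u}} (f : A ⟶ B)
    (w : G.obj A) : H.map f (η.app A w) = η.app B (G.map f w) :=
  (ConcreteCategory.congr_hom (η.naturality f) w).symm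

/-- The four "short exact sequence of cross-effects" statements, for fixed `X, Y`. -/
theorem cr_aux (F₁ F F₂ : GrpCat.{u} ⥤ GrpCat.{u}) (ι : F₁ ⟶ F) (π : F ⟶ F₂)
    (hinj : ∀ A : GrpCat.{u}, Function.Injective (ι.app A))
    (hsurj : ∀ A : GrpCat.{u}, Function.Surjective (π.app A))
    (hexact : ∀ A : GrpCat.{u}, (π.app A).hom.ker = (ι.app A).hom.range)
    (h₁ : Subsingleton (F₁.obj (GrpCat.of PUnit)))
    (X Y : Type u) [Group X] [Group Y] :
      (∀ w ∈ (crMap F₁ X Y).ker,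
        ι.app (GrpCat.of (Monoid.Coprod X Y)) w ∈ (crMap F X Y).ker) ∧
      (∀ w ∈ (crMap F X Y).ker,
        π.app (GrpCat.of (Monoid.Coprod X Y)) w ∈ (crMap F₂ X Y).ker) ∧
      (∀ v ∈ (crMap F₂ X Y).ker,
        ∃ w ∈ (crMap F X Y).ker, π.app (GrpCat.of (Monoid.Coprod X Y)) w = v) ∧
      (∀ w ∈ (crMap F X Y).ker,
        (π.app (GrpCat.of (Monoid.Coprod X Y)) w = 1 ↔
          ∃ u ∈ (crMap F₁ X Y).ker, ι.app (GrpCat.of (Monoid.Coprod X Y)) u = w)) := by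
  set C := GrpCat.of (Monoid.Coprod X Y) with hC
  have piota : ∀ u : F₁.obj C, π.app C (ι.app C u) = 1 := by
    intro u
    have hm : ι.app C u ∈ (ι.app C).hom.range := ⟨u, rfl⟩
    rw [← hexact] at hm
    exact hm
  refine ⟨?_, ?_, ?_, ?_⟩
  · intro w hw
    rw [cr_mem_ker_iff] at hw ⊢
    refine ⟨?_, ?_⟩
    · rw [cr_nat ι, hw.1]; exact map_one _
    · rw [cr_nat ι, hw.2]; exact map_one _
  · intro w hw
    rw [cr_mem_ker_iff] at hw ⊢
    refine ⟨?_, ?_⟩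
    · rw [cr_nat π, hw.1]; exact map_one _
    · rw [cr_nat π, hw.2]; exact map_one _
  · intro v hv
    rw [cr_mem_ker_iff] at hv
    obtain ⟨w₀, hw₀⟩ := hsurj C v
    -- the two components of `crMap F w₀` are in the image of `ι`
    have hk1 : F.map (crR1 X Y) w₀ ∈ (π.app (GrpCat.of X)).hom.ker := by
      show π.app (GrpCat.of X) (F.map (crR1 X Y) w₀) = 1
      rw [← cr_nat π, hw₀, hv.1]
    have hk2 : F.map (crR2 X Y) w₀ ∈ (π.app (GrpCat.of Y)).hom.ker := by
      show π.app (GrpCat.of Y) (F.map (crR2 X Y) w₀) = 1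
      rw [← cr_nat π, hw₀, hv.2]
    rw [hexact] at hk1 hk2
    obtain ⟨a, ha⟩ := hk1
    obtain ⟨b, hb⟩ := hk2
    refine ⟨w₀ * (ι.app C (F₁.map (crJ1 X Y) a))⁻¹ * (ι.app C (F₁.map (crJ2 X Y) b))⁻¹,
      ?_, ?_⟩
    · rw [cr_mem_ker_iff]
      constructor
      · rw [map_mul, map_mul, map_inv, map_inv, cr_nat ι, cr_nat ι,
          cr_map_map F₁ (crJ1 X Y) (crR1 X Y), crJ1_comp_crR1, cr_map_id,
          cr_map_map F₁ (crJ2 X Y) (crR1 X Y), crJ2_comp_crR1,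
          cr_triv_map F₁ h₁, ha, map_one]
        group
      · rw [map_mul, map_mul, map_inv, map_inv, cr_nat ι, cr_nat ι,
          cr_map_map F₁ (crJ1 X Y) (crR2 X Y), crJ1_comp_crR2,
          cr_map_map F₁ (crJ2 X Y) (crR2 X Y), crJ2_comp_crR2, cr_map_id,
          cr_triv_map F₁ h₁, hb, map_one]
        group
    · rw [map_mul, map_mul, map_inv, map_inv, hw₀, piota, piota]
      group
  · intro w hw
    constructor
    · intro hπ
      have hm : w ∈ (π.app C).hom.ker := hπ
      rw [hexact] at hm
      obtain ⟨u, hu⟩ := hm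
      refine ⟨u, ?_, hu⟩
      rw [cr_mem_ker_iff] at hw ⊢
      constructor
      · apply hinj (GrpCat.of X)
        rw [← cr_nat ι, hu, hw.1, map_one]
      · apply hinj (GrpCat.of Y)
        rw [← cr_nat ι, hu, hw.2, map_one]
    · rintro ⟨u, -, rfl⟩
      exact piota u

/-- Given a pointwise short exact sequence `1 → F₁ → F → F₂ → 1` of endofunctors of groups
preserving the trivial group, for all groups `X, Y` the second cross-effects fit in a short
exact sequence `1 → cr₂F₁(X,Y) → cr₂F(X,Y) → cr₂F₂(X,Y) → 1`; in particular `F` is linear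
(all second cross-effects vanish) iff both `F₁` and `F₂` are. -/
theorem cross_effect_ses_of_ses_of_functors
    (F₁ F F₂ : GrpCat.{u} ⥤ GrpCat.{u}) (ι : F₁ ⟶ F) (π : F ⟶ F₂)
    (hinj : ∀ A : GrpCat.{u}, Function.Injective (ι.app A))
    (hsurj : ∀ A : GrpCat.{u}, Function.Surjective (π.app A))
    (hexact : ∀ A : GrpCat.{u}, (π.app A).hom.ker = (ι.app A).hom.range)
    (h₁ : Subsingleton (F₁.obj (GrpCat.of PUnit)))
    (h : Subsingleton (F.obj (GrpCat.of PUnit)))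
    (h₂ : Subsingleton (F₂.obj (GrpCat.of PUnit))) :
    (∀ (X Y : Type u) (_ : Group X) (_ : Group Y),
      (∀ w ∈ (crMap F₁ X Y).ker,
        ι.app (GrpCat.of (Monoid.Coprod X Y)) w ∈ (crMap F X Y).ker) ∧
      (∀ w ∈ (crMap F X Y).ker,
        π.app (GrpCat.of (Monoid.Coprod X Y)) w ∈ (crMap F₂ X Y).ker) ∧
      (∀ v ∈ (crMap F₂ X Y).ker,
        ∃ w ∈ (crMap F X Y).ker, π.app (GrpCat.of (Monoid.Coprod X Y)) w = v) ∧
      (∀ w ∈ (crMap F X Y).ker,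
        (π.app (GrpCat.of (Monoid.Coprod X Y)) w = 1 ↔
          ∃ u ∈ (crMap F₁ X Y).ker, ι.app (GrpCat.of (Monoid.Coprod X Y)) u = w))) ∧
    ((∀ (X Y : Type u) (_ : Group X) (_ : Group Y), (crMap F X Y).ker = ⊥) ↔
      ((∀ (X Y : Type u) (_ : Group X) (_ : Group Y), (crMap F₁ X Y).ker = ⊥) ∧
        (∀ (X Y : Type u) (_ : Group X) (_ : Group Y), (crMap F₂ X Y).ker = ⊥))) := by
  have main := fun (X Y : Type u) (gX : Group X) (gY : Group Y) =>
    cr_aux F₁ F F₂ ι π hinj hsurj hexact h₁ X Y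
  refine ⟨main, ?_⟩
  constructor
  · intro hF
    constructor
    · intro X Y gX gY
      rw [Subgroup.eq_bot_iff_forall]
      intro w hw
      have h1 := (main X Y gX gY).1 w hw
      rw [hF X Y gX gY, Subgroup.mem_bot] at h1
      have := hinj (GrpCat.of (Monoid.Coprod X Y))
      apply this
      rw [h1, map_one]
    · intro X Y gX gY
      rw [Subgroup.eq_bot_iff_forall]
      intro v hv
      obtain ⟨w, hwk, hwv⟩ := (main X Y gX gY).2.2.1 v hv
      rw [hF X Y gX gY, Subgroup.mem_bot] at hwk
      rw [← hwv, hwk, map_one]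
  · rintro ⟨hF₁, hF₂⟩
    intro X Y gX gY
    rw [Subgroup.eq_bot_iff_forall]
    intro w hw
    have hπ : π.app (GrpCat.of (Monoid.Coprod X Y)) w = 1 := by
      have h2 := (main X Y gX gY).2.1 w hw
      rwa [hF₂ X Y gX gY, Subgroup.mem_bot] at h2
    obtain ⟨u, huk, hu⟩ := ((main X Y gX gY).2.2.2 w hw).mp hπ
    rw [hF₁ X Y gX gY, Subgroup.mem_bot] at huk
    rw [← hu, huk, map_one]
end
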